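/- arXiv:2603.24085 — 2 statements merged into one kernel-verified Lean document; each statement's English description precedes it below -/
import Mathlib

section
/- Let ρ ∈ (0,1), γ > 0, T > 0 and 0 < λ₁ ≤ λ. Then for every t ∈ [0,T] one has A_ρ(λ,t) ≥ C(ρ,γ,λ₁) > 0, where C(ρ,γ,λ₁) = (γ sin(ρπ)/(3π)) ∫₀^∞ r^{ρ−1} e^{−rT} / (r²/λ₁² + γ² r^{2ρ} + 1) dr. -/
open MeasureTheory Real Set

lemma hInt (ρ T : ℝ) (hρ0 : 0 < ρ) (hρ1 : ρ < 1) (hT : 0 < T) :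
    IntegrableOn (fun r : ℝ => r ^ (ρ - 1) * Real.exp (-r * T)) (Ioi 0) := by
  have hm : Measurable fun r : ℝ => r ^ (ρ - 1) * Real.exp (-r * T) := by measurability
  have h01 : IntegrableOn (fun r : ℝ => r ^ (ρ - 1) * Real.exp (-r * T)) (Ioc 0 1) := by
    apply Integrable.mono'
      (intervalIntegral.intervalIntegrable_rpow' (by linarith : (-1:ℝ) < ρ - 1)).1
      hm.aestronglyMeasurable
    filter_upwards [ae_restrict_mem measurableSet_Ioc] with r hr
    rw [norm_mul, norm_of_nonneg (Real.rpow_nonneg hr.1.le _), norm_of_nonneg (Real.exp_nonneg _)]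
    exact mul_le_of_le_one_right (Real.rpow_nonneg hr.1.le _)
      (Real.exp_le_one_iff.2 (by nlinarith [hr.1.le]))
  have h1 : IntegrableOn (fun r : ℝ => r ^ (ρ - 1) * Real.exp (-r * T)) (Ioi 1) := by
    apply Integrable.mono' (exp_neg_integrableOn_Ioi 1 hT) hm.aestronglyMeasurable
    filter_upwards [ae_restrict_mem measurableSet_Ioi] with r hr
    rw [norm_mul, norm_of_nonneg (Real.rpow_nonneg (by linarith [mem_Ioi.1 hr] : (0:ℝ) ≤ r) _),
      norm_of_nonneg (Real.exp_nonneg _)]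
    have : -r * T = -T * r := by ring
    rw [this]
    exact mul_le_of_le_one_left (Real.exp_nonneg _)
      (Real.rpow_le_one_of_one_le_of_nonpos (le_of_lt hr) (by linarith))
  rw [← Ioc_union_Ioi_eq_Ioi (zero_le_one : (0:ℝ) ≤ 1)]
  exact h01.union h1

lemma gInt (ρ γ T lam₁ : ℝ) (hρ0 : 0 < ρ) (hρ1 : ρ < 1) (hγ : 0 < γ) (hT : 0 < T) (hlam₁ : 0 < lam₁) :
    IntegrableOn (fun r : ℝ =>
      r ^ (ρ - 1) * Real.exp (-r * T) / (r ^ 2 / lam₁ ^ 2 + γ ^ 2 * r ^ (2 * ρ) + 1)) (Ioi 0) := by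
  have hm : Measurable fun r : ℝ =>
      r ^ (ρ - 1) * Real.exp (-r * T) / (r ^ 2 / lam₁ ^ 2 + γ ^ 2 * r ^ (2 * ρ) + 1) := by
    measurability
  apply Integrable.mono' (hInt ρ T hρ0 hρ1 hT) hm.aestronglyMeasurable
  filter_upwards [ae_restrict_mem measurableSet_Ioi] with r hr
  have hr0 : 0 < r := hr
  have hQ : (1:ℝ) ≤ r ^ 2 / lam₁ ^ 2 + γ ^ 2 * r ^ (2 * ρ) + 1 := by
    have h1 : 0 ≤ r ^ 2 / lam₁ ^ 2 := by positivity
    have h2 : 0 ≤ γ ^ 2 * r ^ (2 * ρ) := by positivity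
    linarith
  have hnum : 0 ≤ r ^ (ρ - 1) * Real.exp (-r * T) := by positivity
  rw [norm_of_nonneg (by positivity)]
  exact div_le_self hnum hQ

/-- The function `A_ρ(λ,t)` from the Rayleigh–Stokes problem. -/
noncomputable def Arho (ρ γ lam t : ℝ) : ℝ :=
  (γ / π) * ∫ r in Ioi (0 : ℝ),
    Real.exp (-r * t) * (lam ^ 2 * r ^ (ρ - 1) * Real.sin (ρ * π)) /
      ((lam - r + lam * γ * r ^ ρ * Real.cos (ρ * π)) ^ 2 +
        (lam * γ * r ^ ρ * Real.sin (ρ * π)) ^ 2)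

lemma D_upper (lam r p R c s : ℝ) (hpsc : (p * s) ^ 2 + (p * c) ^ 2 = p ^ 2)
    (hrr : r ^ 2 ≤ R) :
    (lam - r + p * c) ^ 2 + (p * s) ^ 2 ≤ 3 * lam ^ 2 + 3 * R + 3 * p ^ 2 := by
  nlinarith [sq_nonneg (lam + r), sq_nonneg (lam - p * c), sq_nonneg (r + p * c),
    sq_nonneg (p * c), sq_nonneg (p * s)]

lemma D_lower (c s x p : ℝ) (hcs : s ^ 2 + c ^ 2 = 1) :
    (1 - |c|) * (x ^ 2 + p ^ 2) ≤ (x + p * c) ^ 2 + (p * s) ^ 2 := by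
  nlinarith [mul_nonneg (by linarith [neg_abs_le c] : (0:ℝ) ≤ |c| + c) (sq_nonneg (x + p)),
    mul_nonneg (by linarith [le_abs_self c] : (0:ℝ) ≤ |c| - c) (sq_nonneg (x - p))]

lemma sin_rho_pos (ρ : ℝ) (hρ0 : 0 < ρ) (hρ1 : ρ < 1) : 0 < Real.sin (ρ * π) :=
  Real.sin_pos_of_pos_of_lt_pi (by positivity) (by nlinarith [Real.pi_pos])

lemma abs_cos_rho_lt_one (ρ : ℝ) (hρ0 : 0 < ρ) (hρ1 : ρ < 1) : |Real.cos (ρ * π)| < 1 := by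
  have hs := sin_rho_pos ρ hρ0 hρ1
  have h := Real.sin_sq_add_cos_sq (ρ * π)
  have : Real.cos (ρ * π) ^ 2 < 1 := by nlinarith
  exact (sq_lt_one_iff_abs_lt_one _).1 this

lemma fInt (ρ γ lam t : ℝ) (hρ0 : 0 < ρ) (hρ1 : ρ < 1) (hγ : 0 < γ) (hlam : 0 < lam)
    (ht : 0 ≤ t) :
    IntegrableOn (fun r : ℝ =>
      Real.exp (-r * t) * (lam ^ 2 * r ^ (ρ - 1) * Real.sin (ρ * π)) /
        ((lam - r + lam * γ * r ^ ρ * Real.cos (ρ * π)) ^ 2 +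
          (lam * γ * r ^ ρ * Real.sin (ρ * π)) ^ 2)) (Ioi 0) := by
  have hs : 0 < Real.sin (ρ * π) := sin_rho_pos ρ hρ0 hρ1
  have hc : |Real.cos (ρ * π)| < 1 := abs_cos_rho_lt_one ρ hρ0 hρ1
  set s := Real.sin (ρ * π)
  set c := Real.cos (ρ * π)
  have hε : 0 < 1 - |c| := by linarith
  have m1 : Measurable fun r : ℝ => r ^ (ρ - 1) := by measurability
  have m2 : Measurable fun r : ℝ => r ^ ρ := by measurability
  have mexp : Measurable fun r : ℝ => Real.exp (-r * t) :=
    (measurable_neg.mul_const t).exp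
  have hm : Measurable fun r : ℝ =>
      Real.exp (-r * t) * (lam ^ 2 * r ^ (ρ - 1) * s) /
        ((lam - r + lam * γ * r ^ ρ * c) ^ 2 + (lam * γ * r ^ ρ * s) ^ 2) :=
    (mexp.mul ((m1.const_mul (lam ^ 2)).mul_const s)).div
      ((((measurable_const.sub measurable_id).add
          ((m2.const_mul (lam * γ)).mul_const c)).pow_const 2).add
        (((m2.const_mul (lam * γ)).mul_const s).pow_const 2))
  -- generic pointwise facts
  have hDlow : ∀ r : ℝ, 0 < r →
      (1 - |c|) * ((lam - r) ^ 2 + (lam * γ * r ^ ρ) ^ 2) ≤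
        (lam - r + lam * γ * r ^ ρ * c) ^ 2 + (lam * γ * r ^ ρ * s) ^ 2 := by
    intro r hr
    exact D_lower c s (lam - r) (lam * γ * r ^ ρ) (Real.sin_sq_add_cos_sq (ρ * π))
  have hfle : ∀ r : ℝ, 0 < r → ∀ d : ℝ, 0 < d →
      d ≤ (lam - r + lam * γ * r ^ ρ * c) ^ 2 + (lam * γ * r ^ ρ * s) ^ 2 →
      Real.exp (-r * t) * (lam ^ 2 * r ^ (ρ - 1) * s) /
        ((lam - r + lam * γ * r ^ ρ * c) ^ 2 + (lam * γ * r ^ ρ * s) ^ 2) ≤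
        lam ^ 2 * r ^ (ρ - 1) * s / d := by
    intro r hr d hd hdle
    apply div_le_div₀ (by positivity)
    · exact mul_le_of_le_one_left (by positivity)
        (Real.exp_le_one_iff.2 (by nlinarith))
    · exact hd
    · exact hdle
  have hnonneg : ∀ r : ℝ, 0 < r →
      0 ≤ Real.exp (-r * t) * (lam ^ 2 * r ^ (ρ - 1) * s) /
        ((lam - r + lam * γ * r ^ ρ * c) ^ 2 + (lam * γ * r ^ ρ * s) ^ 2) := by
    intro r hr
    positivity
  have h01 : IntegrableOn (fun r : ℝ =>
      Real.exp (-r * t) * (lam ^ 2 * r ^ (ρ - 1) * s) /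
        ((lam - r + lam * γ * r ^ ρ * c) ^ 2 + (lam * γ * r ^ ρ * s) ^ 2))
      (Ioc 0 (lam / 2)) := by
    apply Integrable.mono'
      (((intervalIntegrable_iff_integrableOn_Ioc_of_le (by positivity : (0:ℝ) ≤ lam / 2)).1
        (intervalIntegral.intervalIntegrable_rpow' (by linarith : (-1:ℝ) < ρ - 1))).const_mul
        (lam ^ 2 * s / ((1 - |c|) * (lam / 2) ^ 2)))
      hm.aestronglyMeasurable
    filter_upwards [ae_restrict_mem measurableSet_Ioc] with r hr
    have hr0 : 0 < r := hr.1
    rw [norm_of_nonneg (hnonneg r hr0)]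
    have hd : (0:ℝ) < (1 - |c|) * (lam / 2) ^ 2 := by positivity
    have hdle : (1 - |c|) * (lam / 2) ^ 2 ≤
        (lam - r + lam * γ * r ^ ρ * c) ^ 2 + (lam * γ * r ^ ρ * s) ^ 2 := by
      refine le_trans ?_ (hDlow r hr0)
      have h2 : lam / 2 ≤ lam - r := by linarith [hr.2]
      have h3 : (lam / 2) ^ 2 ≤ (lam - r) ^ 2 + (lam * γ * r ^ ρ) ^ 2 := by
        nlinarith [sq_nonneg (lam * γ * r ^ ρ)]
      exact mul_le_mul_of_nonneg_left h3 hε.le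
    calc Real.exp (-r * t) * (lam ^ 2 * r ^ (ρ - 1) * s) /
          ((lam - r + lam * γ * r ^ ρ * c) ^ 2 + (lam * γ * r ^ ρ * s) ^ 2)
        ≤ lam ^ 2 * r ^ (ρ - 1) * s / ((1 - |c|) * (lam / 2) ^ 2) :=
          hfle r hr0 _ hd hdle
      _ = lam ^ 2 * s / ((1 - |c|) * (lam / 2) ^ 2) * r ^ (ρ - 1) := by ring
  have h1 : IntegrableOn (fun r : ℝ =>
      Real.exp (-r * t) * (lam ^ 2 * r ^ (ρ - 1) * s) /
        ((lam - r + lam * γ * r ^ ρ * c) ^ 2 + (lam * γ * r ^ ρ * s) ^ 2))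
      (Ioi (lam / 2)) := by
    apply Integrable.mono'
      ((integrableOn_Ioi_rpow_of_lt (by linarith : -ρ - 1 < -1)
        (by positivity : (0:ℝ) < lam / 2)).const_mul (s / ((1 - |c|) * γ ^ 2)))
      hm.aestronglyMeasurable
    filter_upwards [ae_restrict_mem measurableSet_Ioi] with r hr
    have hr0 : 0 < r := lt_trans (by positivity) hr
    rw [norm_of_nonneg (hnonneg r hr0)]
    have hrρ : 0 < r ^ ρ := Real.rpow_pos_of_pos hr0 _
    have hd : (0:ℝ) < (1 - |c|) * (lam * γ * r ^ ρ) ^ 2 := by positivity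
    have hdle : (1 - |c|) * (lam * γ * r ^ ρ) ^ 2 ≤
        (lam - r + lam * γ * r ^ ρ * c) ^ 2 + (lam * γ * r ^ ρ * s) ^ 2 := by
      refine le_trans ?_ (hDlow r hr0)
      nlinarith [sq_nonneg (lam - r), hε]
    calc Real.exp (-r * t) * (lam ^ 2 * r ^ (ρ - 1) * s) /
          ((lam - r + lam * γ * r ^ ρ * c) ^ 2 + (lam * γ * r ^ ρ * s) ^ 2)
        ≤ lam ^ 2 * r ^ (ρ - 1) * s / ((1 - |c|) * (lam * γ * r ^ ρ) ^ 2) :=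
          hfle r hr0 _ hd hdle
      _ = s / ((1 - |c|) * γ ^ 2) * (r ^ (ρ - 1) / (r ^ ρ) ^ 2) := by
          field_simp
      _ = s / ((1 - |c|) * γ ^ 2) * r ^ (-ρ - 1) := by
          rw [pow_two (r ^ ρ), ← Real.rpow_add hr0, ← Real.rpow_sub hr0]
          congr 1
          ring_nf
  rw [← Ioc_union_Ioi_eq_Ioi (by positivity : (0:ℝ) ≤ lam / 2)]
  exact h01.union h1


/-- Lower bound `A_ρ(λ,t) ≥ C(ρ,γ,λ₁) > 0` on `[0,T]`. -/
theorem Arho_lower_bound (ρ γ T lam₁ lam : ℝ) (hρ : ρ ∈ Ioo (0 : ℝ) 1)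
    (hγ : 0 < γ) (hT : 0 < T) (hlam₁ : 0 < lam₁) (hlam : lam₁ ≤ lam) :
    0 < (γ * Real.sin (ρ * π) / (3 * π)) *
        ∫ r in Ioi (0 : ℝ),
          r ^ (ρ - 1) * Real.exp (-r * T) / (r ^ 2 / lam₁ ^ 2 + γ ^ 2 * r ^ (2 * ρ) + 1) ∧
    ∀ t ∈ Icc (0 : ℝ) T,
      Arho ρ γ lam t ≥
        (γ * Real.sin (ρ * π) / (3 * π)) *
          ∫ r in Ioi (0 : ℝ),
            r ^ (ρ - 1) * Real.exp (-r * T) / (r ^ 2 / lam₁ ^ 2 + γ ^ 2 * r ^ (2 * ρ) + 1) := by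
  obtain ⟨hρ0, hρ1⟩ := hρ
  have hπ : 0 < π := Real.pi_pos
  have hs : 0 < Real.sin (ρ * π) := sin_rho_pos ρ hρ0 hρ1
  have hc : |Real.cos (ρ * π)| < 1 := abs_cos_rho_lt_one ρ hρ0 hρ1
  have hsc : Real.sin (ρ * π) ^ 2 + Real.cos (ρ * π) ^ 2 = 1 := Real.sin_sq_add_cos_sq (ρ * π)
  have hε : 0 < 1 - |Real.cos (ρ * π)| := by linarith
  have hlam0 : 0 < lam := lt_of_lt_of_le hlam₁ hlam
  have hg : IntegrableOn (fun r : ℝ =>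
      r ^ (ρ - 1) * Real.exp (-r * T) / (r ^ 2 / lam₁ ^ 2 + γ ^ 2 * r ^ (2 * ρ) + 1)) (Ioi 0) :=
    gInt ρ γ T lam₁ hρ0 hρ1 hγ hT hlam₁
  -- positivity of the constant
  have hIgpos : 0 < ∫ r in Ioi (0:ℝ),
      r ^ (ρ - 1) * Real.exp (-r * T) / (r ^ 2 / lam₁ ^ 2 + γ ^ 2 * r ^ (2 * ρ) + 1) := by
    rw [setIntegral_pos_iff_support_of_nonneg_ae _ hg]
    · have hsub : Ioi (0:ℝ) ⊆ Function.support (fun r : ℝ =>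
          r ^ (ρ - 1) * Real.exp (-r * T) / (r ^ 2 / lam₁ ^ 2 + γ ^ 2 * r ^ (2 * ρ) + 1)) := by
        intro r hr
        have hr0 : (0:ℝ) < r := hr
        exact ne_of_gt (by positivity)
      have hle : volume (Ioi (0:ℝ)) ≤ volume (Function.support (fun r : ℝ =>
          r ^ (ρ - 1) * Real.exp (-r * T) / (r ^ 2 / lam₁ ^ 2 + γ ^ 2 * r ^ (2 * ρ) + 1))
          ∩ Ioi 0) :=
        measure_mono (subset_inter hsub Subset.rfl)
      rw [Real.volume_Ioi] at hle
      exact lt_of_lt_of_le (by norm_num) hle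
    · filter_upwards [ae_restrict_mem measurableSet_Ioi] with r hr
      have hr0 : (0:ℝ) < r := hr
      positivity
  constructor
  · exact mul_pos (div_pos (mul_pos hγ hs) (by positivity)) hIgpos
  · intro t ht
    obtain ⟨ht0, htT⟩ := ht
    have hf : IntegrableOn (fun r : ℝ =>
        Real.exp (-r * t) * (lam ^ 2 * r ^ (ρ - 1) * Real.sin (ρ * π)) /
          ((lam - r + lam * γ * r ^ ρ * Real.cos (ρ * π)) ^ 2 +
            (lam * γ * r ^ ρ * Real.sin (ρ * π)) ^ 2)) (Ioi 0) :=
      fInt ρ γ lam t hρ0 hρ1 hγ hlam0 ht0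
    -- pointwise inequality
    have key : ∀ r ∈ Ioi (0:ℝ),
        Real.sin (ρ * π) / 3 *
          (r ^ (ρ - 1) * Real.exp (-r * T) / (r ^ 2 / lam₁ ^ 2 + γ ^ 2 * r ^ (2 * ρ) + 1)) ≤
        Real.exp (-r * t) * (lam ^ 2 * r ^ (ρ - 1) * Real.sin (ρ * π)) /
          ((lam - r + lam * γ * r ^ ρ * Real.cos (ρ * π)) ^ 2 +
            (lam * γ * r ^ ρ * Real.sin (ρ * π)) ^ 2) := by
      intro r hr
      have hr0 : (0:ℝ) < r := hr
      have hrρ : 0 < r ^ ρ := Real.rpow_pos_of_pos hr0 _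
      have hQ0 : 0 < r ^ 2 / lam₁ ^ 2 + γ ^ 2 * r ^ (2 * ρ) + 1 := by positivity
      have hDpos : 0 < (lam - r + lam * γ * r ^ ρ * Real.cos (ρ * π)) ^ 2 +
          (lam * γ * r ^ ρ * Real.sin (ρ * π)) ^ 2 := by
        refine lt_of_lt_of_le (mul_pos hε (by positivity :
          (0:ℝ) < (lam - r) ^ 2 + (lam * γ * r ^ ρ) ^ 2)) ?_
        exact D_lower _ _ _ _ hsc
      have hp2 : (lam * γ * r ^ ρ) ^ 2 = lam ^ 2 * γ ^ 2 * r ^ (2 * ρ) := by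
        rw [two_mul, Real.rpow_add hr0]
        ring
      have h1 : (1:ℝ) ≤ lam ^ 2 / lam₁ ^ 2 := by
        rw [le_div_iff₀ (by positivity)]
        nlinarith
      have hrr : r ^ 2 ≤ lam ^ 2 * (r ^ 2 / lam₁ ^ 2) := by
        calc r ^ 2 = r ^ 2 * 1 := by ring
          _ ≤ r ^ 2 * (lam ^ 2 / lam₁ ^ 2) :=
            mul_le_mul_of_nonneg_left h1 (sq_nonneg r)
          _ = lam ^ 2 * (r ^ 2 / lam₁ ^ 2) := by ring
      have hpsc : (lam * γ * r ^ ρ * Real.sin (ρ * π)) ^ 2 +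
          (lam * γ * r ^ ρ * Real.cos (ρ * π)) ^ 2 = (lam * γ * r ^ ρ) ^ 2 := by
        have : (lam * γ * r ^ ρ * Real.sin (ρ * π)) ^ 2 +
            (lam * γ * r ^ ρ * Real.cos (ρ * π)) ^ 2 =
            (lam * γ * r ^ ρ) ^ 2 * (Real.sin (ρ * π) ^ 2 + Real.cos (ρ * π) ^ 2) := by ring
        rw [this, hsc, mul_one]
      have hDup : (lam - r + lam * γ * r ^ ρ * Real.cos (ρ * π)) ^ 2 +
          (lam * γ * r ^ ρ * Real.sin (ρ * π)) ^ 2 ≤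
          3 * lam ^ 2 * (r ^ 2 / lam₁ ^ 2 + γ ^ 2 * r ^ (2 * ρ) + 1) := by
        have hgoal : (lam - r + lam * γ * r ^ ρ * Real.cos (ρ * π)) ^ 2 +
            (lam * γ * r ^ ρ * Real.sin (ρ * π)) ^ 2 ≤
            3 * lam ^ 2 + 3 * (lam ^ 2 * (r ^ 2 / lam₁ ^ 2)) + 3 * (lam * γ * r ^ ρ) ^ 2 :=
          D_upper lam r (lam * γ * r ^ ρ) (lam ^ 2 * (r ^ 2 / lam₁ ^ 2)) _ _ hpsc hrr
        calc (lam - r + lam * γ * r ^ ρ * Real.cos (ρ * π)) ^ 2 +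
            (lam * γ * r ^ ρ * Real.sin (ρ * π)) ^ 2
            ≤ 3 * lam ^ 2 + 3 * (lam ^ 2 * (r ^ 2 / lam₁ ^ 2)) + 3 * (lam * γ * r ^ ρ) ^ 2 := hgoal
          _ = 3 * lam ^ 2 * (r ^ 2 / lam₁ ^ 2 + γ ^ 2 * r ^ (2 * ρ) + 1) := by
              rw [hp2]; ring
      have heq : Real.sin (ρ * π) / 3 *
          (r ^ (ρ - 1) * Real.exp (-r * T) / (r ^ 2 / lam₁ ^ 2 + γ ^ 2 * r ^ (2 * ρ) + 1)) =
          Real.exp (-r * T) * (lam ^ 2 * r ^ (ρ - 1) * Real.sin (ρ * π)) /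
            (3 * lam ^ 2 * (r ^ 2 / lam₁ ^ 2 + γ ^ 2 * r ^ (2 * ρ) + 1)) := by
        field_simp
      rw [heq]
      apply div_le_div₀ (by positivity) _ hDpos hDup
      have hexp : Real.exp (-r * T) ≤ Real.exp (-r * t) :=
        Real.exp_le_exp.2 (by nlinarith)
      exact mul_le_mul_of_nonneg_right hexp (by positivity)
    have hmono : ∫ r in Ioi (0:ℝ), Real.sin (ρ * π) / 3 *
        (r ^ (ρ - 1) * Real.exp (-r * T) / (r ^ 2 / lam₁ ^ 2 + γ ^ 2 * r ^ (2 * ρ) + 1)) ≤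
        ∫ r in Ioi (0:ℝ),
          Real.exp (-r * t) * (lam ^ 2 * r ^ (ρ - 1) * Real.sin (ρ * π)) /
            ((lam - r + lam * γ * r ^ ρ * Real.cos (ρ * π)) ^ 2 +
              (lam * γ * r ^ ρ * Real.sin (ρ * π)) ^ 2) :=
      setIntegral_mono_on (hg.const_mul _) hf measurableSet_Ioi key
    rw [MeasureTheory.integral_const_mul] at hmono
    show Arho ρ γ lam t ≥ _
    simp only [Arho]
    have halg : γ * Real.sin (ρ * π) / (3 * π) *
        ∫ r in Ioi (0:ℝ),
          r ^ (ρ - 1) * Real.exp (-r * T) / (r ^ 2 / lam₁ ^ 2 + γ ^ 2 * r ^ (2 * ρ) + 1) =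
        γ / π * (Real.sin (ρ * π) / 3 *
        ∫ r in Ioi (0:ℝ),
          r ^ (ρ - 1) * Real.exp (-r * T) / (r ^ 2 / lam₁ ^ 2 + γ ^ 2 * r ^ (2 * ρ) + 1)) := by
      ring
    rw [ge_iff_le, halg]
    exact mul_le_mul_of_nonneg_left hmono (by positivity)
end

section
/- Let ρ ∈ (0,1) and γ > 0. There exists a constant C > 0 such that for every λ > 0 and every t > 0 one has λ·B_ρ(λ,t) ≤ C · min{t^{−1}, t^{ρ−1}}. -/
open MeasureTheory Real Set

/-- The function `B_ρ(λ,t)` from the Rayleigh–Stokes problem. -/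
noncomputable def Brho (ρ γ lam t : ℝ) : ℝ :=
  (γ / π) * ∫ r in Ioi (0 : ℝ),
    Real.exp (-r * t) * (lam * r ^ ρ * Real.sin (ρ * π)) /
      ((lam - r + lam * γ * r ^ ρ * Real.cos (ρ * π)) ^ 2 +
        (lam * γ * r ^ ρ * Real.sin (ρ * π)) ^ 2)

namespace BrhoAux

/-- The integrand of `Brho`. -/
noncomputable def f (ρ γ lam t r : ℝ) : ℝ :=
  Real.exp (-r * t) * (lam * r ^ ρ * Real.sin (ρ * π)) /
      ((lam - r + lam * γ * r ^ ρ * Real.cos (ρ * π)) ^ 2 +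
        (lam * γ * r ^ ρ * Real.sin (ρ * π)) ^ 2)

lemma Brho_eq (ρ γ lam t : ℝ) :
    Brho ρ γ lam t = (γ / π) * ∫ r in Ioi (0 : ℝ), f ρ γ lam t r := rfl

/-- Cauchy-kernel integral bound via arctan. -/
lemma cauchy_le {c m a b : ℝ} (hc : 0 < c) (hab : a ≤ b) :
    ∫ r in Ioc a b, ((r - m)^2 + c^2)⁻¹ ≤ π / c := by
  have hcont : Continuous fun r : ℝ => ((r-m)^2+c^2)⁻¹ :=
    Continuous.inv₀ (by continuity) (fun x => by positivity)
  have hderiv : ∀ r ∈ uIcc a b,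
      HasDerivAt (fun r => c⁻¹ * Real.arctan ((r-m)/c)) (((r-m)^2+c^2)⁻¹) r := by
    intro r _
    have h1 : HasDerivAt (fun r : ℝ => (r-m)/c) (1/c) r := by
      simpa using ((hasDerivAt_id r).sub_const m).div_const c
    have h2 := (Real.hasDerivAt_arctan ((r-m)/c)).comp r h1
    have h3 := h2.const_mul c⁻¹
    refine HasDerivAt.congr_deriv h3 ?_
    · field_simp; ring
  rw [← intervalIntegral.integral_of_le hab,
    intervalIntegral.integral_eq_sub_of_hasDerivAt hderiv (hcont.intervalIntegrable a b)]
  have h4 := Real.arctan_lt_pi_div_two ((b-m)/c)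
  have h5 := Real.neg_pi_div_two_lt_arctan ((a-m)/c)
  have h6 : π / c = c⁻¹ * π := div_eq_inv_mul π c
  have h7 : 0 ≤ c⁻¹ * (π/2 - Real.arctan ((b-m)/c)) :=
    mul_nonneg (inv_nonneg.mpr hc.le) (by linarith)
  have h8 : 0 ≤ c⁻¹ * (Real.arctan ((a-m)/c) + π/2) :=
    mul_nonneg (inv_nonneg.mpr hc.le) (by linarith)
  nlinarith [h7, h8]

lemma exp_neg_le {y : ℝ} (hy : 0 < y) : Real.exp (-y) ≤ y⁻¹ := by
  rw [Real.exp_neg]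
  exact inv_anti₀ hy (by linarith [Real.add_one_le_exp y])

/-- Lower bound for the denominator. -/
lemma denom_ge {a X c s : ℝ} (hX : 0 ≤ X) (h1 : s^2 + c^2 = 1) :
    (1 - |c|) * (a^2 + X^2) ≤ (a + X*c)^2 + (X*s)^2 := by
  have habs : |c| ^ 2 = c ^ 2 := sq_abs c
  have h3 : -(|c| * (a^2 + X^2)) ≤ 2 * a * X * c := by
    have h4 : |2 * a * X * c| ≤ |c| * (a^2 + X^2) := by
      rw [abs_mul, abs_mul, abs_mul, abs_of_nonneg hX, abs_two]
      calc 2 * |a| * X * |c| ≤ (a^2 + X^2) * |c| := by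
            nlinarith [sq_nonneg (|a| - X), sq_abs a, abs_nonneg c, abs_nonneg a]
        _ = |c| * (a^2 + X^2) := by ring
    linarith [neg_abs_le (2 * a * X * c)]
  nlinarith [abs_nonneg c]

section

variable {ρ γ lam t : ℝ}

/-- The "min" majorant used on `(0, λ/2]`. -/
noncomputable def F (ρ γ r : ℝ) : ℝ := min (4 * r ^ (ρ-1)) ((γ^2)⁻¹ * r ^ (-1-ρ))

lemma F_nonneg {r : ℝ} (hr : 0 < r) : 0 ≤ F ρ γ r :=
  le_min (mul_nonneg (by norm_num) (Real.rpow_nonneg hr.le _))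
    (mul_nonneg (inv_nonneg.mpr (sq_nonneg γ)) (Real.rpow_nonneg hr.le _))

lemma F_contOn : ContinuousOn (F ρ γ) (Ioi (0:ℝ)) := by
  have h1 : ContinuousOn (fun r : ℝ => 4 * r ^ (ρ-1)) (Ioi (0:ℝ)) :=
    continuousOn_const.mul
      (ContinuousOn.rpow_const continuousOn_id (fun x hx => Or.inl (ne_of_gt hx)))
  have h2 : ContinuousOn (fun r : ℝ => (γ^2)⁻¹ * r ^ (-1-ρ)) (Ioi (0:ℝ)) :=
    continuousOn_const.mul
      (ContinuousOn.rpow_const continuousOn_id (fun x hx => Or.inl (ne_of_gt hx)))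
  intro x hx
  exact Filter.Tendsto.min (h1 x hx) (h2 x hx)

lemma F_intOn (hρ0 : 0 < ρ) (hρ1 : ρ < 1) : IntegrableOn (F ρ γ) (Ioi (0:ℝ)) := by
  rw [← Ioc_union_Ioi_eq_Ioi (zero_le_one (α := ℝ))]
  refine IntegrableOn.union ?_ ?_
  · refine Integrable.mono' (g := fun r => 4 * r ^ (ρ-1)) ?_ ?_ ?_
    · exact (intervalIntegrable_iff_integrableOn_Ioc_of_le zero_le_one).mp
        ((intervalIntegral.intervalIntegrable_rpow' (by linarith)).const_mul 4)
    · exact (F_contOn.mono Ioc_subset_Ioi_self).aestronglyMeasurable measurableSet_Ioc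
    · filter_upwards [ae_restrict_mem measurableSet_Ioc] with r hr
      rw [Real.norm_eq_abs, abs_of_nonneg (F_nonneg hr.1)]
      exact min_le_left _ _
  · refine Integrable.mono' (g := fun r => (γ^2)⁻¹ * r ^ (-1-ρ)) ?_ ?_ ?_
    · exact (integrableOn_Ioi_rpow_of_lt (by linarith) one_pos).const_mul _
    · exact (F_contOn.mono (Ioi_subset_Ioi zero_le_one)).aestronglyMeasurable measurableSet_Ioi
    · filter_upwards [ae_restrict_mem measurableSet_Ioi] with r hr
      rw [Real.norm_eq_abs, abs_of_nonneg (F_nonneg (lt_trans one_pos hr))]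
      exact min_le_right _ _

lemma F_integral (hρ0 : 0 < ρ) (hρ1 : ρ < 1) :
    ∫ r in Ioi (0:ℝ), F ρ γ r ≤ 4/ρ + (γ^2)⁻¹/ρ := by
  rw [← Ioc_union_Ioi_eq_Ioi (zero_le_one (α := ℝ)),
    setIntegral_union (Ioc_disjoint_Ioi le_rfl) measurableSet_Ioi
      (((F_intOn hρ0 hρ1)).mono_set Ioc_subset_Ioi_self)
      (((F_intOn hρ0 hρ1)).mono_set (Ioi_subset_Ioi zero_le_one))]
  have i1 : ∫ r in Ioc (0:ℝ) 1, F ρ γ r ≤ ∫ r in Ioc (0:ℝ) 1, 4 * r ^ (ρ-1) := by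
    refine setIntegral_mono_on ((F_intOn hρ0 hρ1).mono_set Ioc_subset_Ioi_self)
      ((intervalIntegrable_iff_integrableOn_Ioc_of_le zero_le_one).mp
        ((intervalIntegral.intervalIntegrable_rpow' (by linarith)).const_mul 4))
      measurableSet_Ioc (fun x hx => min_le_left _ _)
  have e1 : ∫ r in Ioc (0:ℝ) 1, 4 * r ^ (ρ-1) = 4/ρ := by
    rw [← intervalIntegral.integral_of_le zero_le_one, intervalIntegral.integral_const_mul,
      integral_rpow (Or.inl (by linarith : (-1:ℝ) < ρ - 1))]
    rw [show ρ - 1 + 1 = ρ by ring, Real.one_rpow, Real.zero_rpow hρ0.ne']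
    ring
  have i2 : ∫ r in Ioi (1:ℝ), F ρ γ r ≤ ∫ r in Ioi (1:ℝ), (γ^2)⁻¹ * r ^ (-1-ρ) := by
    refine setIntegral_mono_on ((F_intOn hρ0 hρ1).mono_set (Ioi_subset_Ioi zero_le_one))
      ((integrableOn_Ioi_rpow_of_lt (by linarith) one_pos).const_mul _)
      measurableSet_Ioi (fun x hx => min_le_right _ _)
  have e2 : ∫ r in Ioi (1:ℝ), (γ^2)⁻¹ * r ^ (-1-ρ) = (γ^2)⁻¹/ρ := by
    rw [integral_const_mul, integral_Ioi_rpow_of_lt (by linarith) one_pos]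
    rw [show (-1) - ρ + 1 = -ρ by ring, Real.one_rpow]
    field_simp
  linarith

lemma denom_pos (hs : 0 < Real.sin (ρ*π)) (hγ : 0 < γ) (hlam : 0 < lam) {r : ℝ} (hr : 0 < r) :
    0 < (lam - r + lam * γ * r ^ ρ * Real.cos (ρ * π)) ^ 2 +
        (lam * γ * r ^ ρ * Real.sin (ρ * π)) ^ 2 :=
  add_pos_of_nonneg_of_pos (sq_nonneg _)
    (pow_pos (mul_pos (mul_pos (mul_pos hlam hγ) (Real.rpow_pos_of_pos hr ρ)) hs) 2)

lemma f_nonneg (hs : 0 < Real.sin (ρ*π)) (hγ : 0 < γ) (hlam : 0 < lam) {r : ℝ} (hr : 0 < r) :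
    0 ≤ f ρ γ lam t r :=
  div_nonneg (mul_nonneg (Real.exp_pos _).le
      (mul_nonneg (mul_nonneg hlam.le (Real.rpow_pos_of_pos hr ρ).le) hs.le))
    (denom_pos hs hγ hlam hr).le

lemma f_contOn (hs : 0 < Real.sin (ρ*π)) (hγ : 0 < γ) (hlam : 0 < lam) :
    ContinuousOn (f ρ γ lam t) (Ioi (0:ℝ)) := by
  have hrpow : ContinuousOn (fun r : ℝ => r ^ ρ) (Ioi (0:ℝ)) :=
    ContinuousOn.rpow_const continuousOn_id (fun x hx => Or.inl (ne_of_gt hx))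
  have hexp : ContinuousOn (fun r : ℝ => Real.exp (-r * t)) (Ioi (0:ℝ)) :=
    (Real.continuous_exp.comp (continuous_neg.mul continuous_const)).continuousOn
  have hnum : ContinuousOn
      (fun r : ℝ => Real.exp (-r * t) * (lam * r ^ ρ * Real.sin (ρ * π))) (Ioi (0:ℝ)) :=
    hexp.mul ((continuousOn_const.mul hrpow).mul continuousOn_const)
  have hden : ContinuousOn (fun r : ℝ =>
      (lam - r + lam * γ * r ^ ρ * Real.cos (ρ * π)) ^ 2 +
        (lam * γ * r ^ ρ * Real.sin (ρ * π)) ^ 2) (Ioi (0:ℝ)) :=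
    (((continuousOn_const.sub continuousOn_id).add
        ((continuousOn_const.mul hrpow).mul continuousOn_const)).pow 2).add
      (((continuousOn_const.mul hrpow).mul continuousOn_const).pow 2)
  exact hnum.div hden (fun x hx => (denom_pos hs hγ hlam hx).ne')

lemma g_le_A (hs : 0 < Real.sin (ρ*π)) (hγ : 0 < γ) (hlam : 0 < lam) {r : ℝ} (hr : 0 < r) :
    lam * f ρ γ lam t r ≤
      (γ^2 * Real.sin (ρ*π))⁻¹ * (r ^ (-ρ) * Real.exp (-(t*r))) := by
  have hX : 0 < r ^ ρ := Real.rpow_pos_of_pos hr ρ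
  have hE : 0 < Real.exp (-r*t) := Real.exp_pos _
  have hs' := hs.ne'
  have hX' := hX.ne'
  have hlam' := hlam.ne'
  have hγ' := hγ.ne'
  have hr' := hr.ne'
  have hD0 : (0:ℝ) < (lam * γ * r ^ ρ * Real.sin (ρ*π))^2 :=
    pow_pos (mul_pos (mul_pos (mul_pos hlam hγ) hX) hs) 2
  have hnum : 0 ≤ lam * (Real.exp (-r*t) * (lam * r ^ ρ * Real.sin (ρ*π))) :=
    mul_nonneg hlam.le (mul_nonneg hE.le
      (mul_nonneg (mul_nonneg hlam.le hX.le) hs.le))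
  have hD : (lam * γ * r ^ ρ * Real.sin (ρ*π))^2 ≤
      (lam - r + lam * γ * r ^ ρ * Real.cos (ρ*π))^2 +
        (lam * γ * r ^ ρ * Real.sin (ρ*π))^2 :=
    le_add_of_nonneg_left (sq_nonneg _)
  have step : lam * f ρ γ lam t r ≤
      lam * (Real.exp (-r*t) * (lam * r ^ ρ * Real.sin (ρ*π))) /
        (lam * γ * r ^ ρ * Real.sin (ρ*π))^2 := by
    unfold f
    rw [← mul_div_assoc]
    exact div_le_div_of_nonneg_left hnum hD0 hD
  refine step.trans (le_of_eq ?_)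
  rw [Real.rpow_neg hr.le, show Real.exp (-(t*r)) = Real.exp (-r*t) by rw [neg_mul, mul_comm]]
  field_simp

lemma g_le_B (hs : 0 < Real.sin (ρ*π)) (hγ : 0 < γ) (hlam : 0 < lam) (ht : 0 < t)
    {r : ℝ} (hr : 0 < r) :
    lam * f ρ γ lam t r ≤
      (Real.sin (ρ*π) / ((1 - |Real.cos (ρ*π)|) * t)) *
        (lam^2 * r ^ ρ / (r * ((lam - r)^2 + (lam * γ * r ^ ρ)^2))) := by
  have hX : 0 < r ^ ρ := Real.rpow_pos_of_pos hr ρ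
  have hsc : Real.sin (ρ*π)^2 + Real.cos (ρ*π)^2 = 1 := Real.sin_sq_add_cos_sq _
  have hκ : 0 < 1 - |Real.cos (ρ*π)| := by
    nlinarith [sq_abs (Real.cos (ρ*π)), abs_nonneg (Real.cos (ρ*π)), mul_pos hs hs]
  have hM : 0 < (lam - r)^2 + (lam * γ * r ^ ρ)^2 :=
    add_pos_of_nonneg_of_pos (sq_nonneg _) (pow_pos (mul_pos (mul_pos hlam hγ) hX) 2)
  have hDge : (1 - |Real.cos (ρ*π)|) * ((lam - r)^2 + (lam * γ * r ^ ρ)^2) ≤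
      (lam - r + lam * γ * r ^ ρ * Real.cos (ρ*π))^2 +
        (lam * γ * r ^ ρ * Real.sin (ρ*π))^2 :=
    denom_ge (mul_pos (mul_pos hlam hγ) hX).le hsc
  have hEb : Real.exp (-r*t) ≤ (r*t)⁻¹ := by
    rw [show -r*t = -(r*t) by ring]
    exact exp_neg_le (mul_pos hr ht)
  have hN : 0 ≤ lam * r ^ ρ * Real.sin (ρ*π) :=
    mul_nonneg (mul_nonneg hlam.le hX.le) hs.le
  have hnum2 : 0 ≤ lam * ((r*t)⁻¹ * (lam * r ^ ρ * Real.sin (ρ*π))) :=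
    mul_nonneg hlam.le (mul_nonneg (inv_nonneg.mpr (mul_pos hr ht).le) hN)
  have step : lam * f ρ γ lam t r ≤
      lam * ((r*t)⁻¹ * (lam * r ^ ρ * Real.sin (ρ*π))) /
        ((1 - |Real.cos (ρ*π)|) * ((lam - r)^2 + (lam * γ * r ^ ρ)^2)) := by
    unfold f
    rw [← mul_div_assoc]
    exact div_le_div₀ hnum2
      (mul_le_mul_of_nonneg_left (mul_le_mul_of_nonneg_right hEb hN) hlam.le)
      (mul_pos hκ hM) hDge
  refine step.trans (le_of_eq ?_)
  have hκ' := hκ.ne'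
  have hM' := hM.ne'
  have hr' := hr.ne'
  have ht' := ht.ne'
  field_simp

lemma h_le_p1 (hρ0 : 0 < ρ) (hγ : 0 < γ) (hlam : 0 < lam) {r : ℝ}
    (hr0 : 0 < r) (hr : r ≤ lam/2) :
    lam^2 * r ^ ρ / (r * ((lam - r)^2 + (lam * γ * r ^ ρ)^2)) ≤ F ρ γ r := by
  have hX : 0 < r ^ ρ := Real.rpow_pos_of_pos hr0 ρ
  have hnum : 0 ≤ lam^2 * r ^ ρ := mul_nonneg (sq_nonneg lam) hX.le
  have hrm : r ^ (ρ-1) = r ^ ρ / r := by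
    rw [Real.rpow_sub hr0, Real.rpow_one]
  have hr' := hr0.ne'
  have hX' := hX.ne'
  have hlam' := hlam.ne'
  have hγ' := hγ.ne'
  refine le_min ?_ ?_
  · have hden : r * (lam/2)^2 ≤ r * ((lam - r)^2 + (lam * γ * r ^ ρ)^2) := by
      apply mul_le_mul_of_nonneg_left _ hr0.le
      nlinarith [sq_nonneg (lam * γ * r ^ ρ)]
    calc lam^2 * r ^ ρ / (r * ((lam - r)^2 + (lam * γ * r ^ ρ)^2))
        ≤ lam^2 * r ^ ρ / (r * (lam/2)^2) :=
          div_le_div_of_nonneg_left hnum (by positivity) hden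
      _ ≤ 4 * r ^ (ρ-1) := le_of_eq (by rw [hrm]; field_simp; ring)
  · have hden : r * (lam * γ * r ^ ρ)^2 ≤ r * ((lam - r)^2 + (lam * γ * r ^ ρ)^2) := by
      apply mul_le_mul_of_nonneg_left (le_add_of_nonneg_left (sq_nonneg _)) hr0.le
    have hB : 0 < lam * γ * r ^ ρ := mul_pos (mul_pos hlam hγ) hX
    have hid : r ^ (-1-ρ) = (r * r ^ ρ)⁻¹ := by
      rw [show (-1-ρ : ℝ) = -(1+ρ) by ring, Real.rpow_neg hr0.le, Real.rpow_add hr0,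
        Real.rpow_one]
    calc lam^2 * r ^ ρ / (r * ((lam - r)^2 + (lam * γ * r ^ ρ)^2))
        ≤ lam^2 * r ^ ρ / (r * (lam * γ * r ^ ρ)^2) :=
          div_le_div_of_nonneg_left hnum (by positivity) hden
      _ ≤ (γ^2)⁻¹ * r ^ (-1-ρ) := le_of_eq (by rw [hid]; field_simp)

lemma h_le_p2 (hρ0 : 0 < ρ) (hρ1 : ρ < 1) (hγ : 0 < γ) (hlam : 0 < lam) {r : ℝ}
    (hr1 : lam/2 < r) :
    lam^2 * r ^ ρ / (r * ((lam - r)^2 + (lam * γ * r ^ ρ)^2)) ≤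
      (lam^2 * (lam/2) ^ (ρ-1)) * (((r - lam)^2 + (lam * γ * (lam/2) ^ ρ)^2)⁻¹) := by
  have hhalf : 0 < lam/2 := half_pos hlam
  have hr0 : 0 < r := lt_trans hhalf hr1
  have hX : 0 < r ^ ρ := Real.rpow_pos_of_pos hr0 ρ
  have hXmono : (lam/2) ^ ρ ≤ r ^ ρ := Real.rpow_le_rpow hhalf.le hr1.le hρ0.le
  have hpow : r ^ (ρ-1) ≤ (lam/2) ^ (ρ-1) :=
    Real.rpow_le_rpow_of_nonpos hhalf hr1.le (by linarith)
  have hc0 : 0 < lam * γ * (lam/2) ^ ρ :=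
    mul_pos (mul_pos hlam hγ) (Real.rpow_pos_of_pos hhalf ρ)
  have hM : 0 < (lam - r)^2 + (lam * γ * r ^ ρ)^2 :=
    add_pos_of_nonneg_of_pos (sq_nonneg _) (pow_pos (mul_pos (mul_pos hlam hγ) hX) 2)
  have hd0 : 0 < (r - lam)^2 + (lam * γ * (lam/2) ^ ρ)^2 :=
    add_pos_of_nonneg_of_pos (sq_nonneg _) (pow_pos hc0 2)
  have hrm : r ^ (ρ-1) = r ^ ρ / r := by rw [Real.rpow_sub hr0, Real.rpow_one]
  have e : lam^2 * r ^ ρ / (r * ((lam - r)^2 + (lam * γ * r ^ ρ)^2)) =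
      (lam^2 * r ^ (ρ-1)) / ((lam - r)^2 + (lam * γ * r ^ ρ)^2) := by
    rw [hrm]; field_simp [hr0.ne']
  rw [e, ← div_eq_mul_inv]
  have hsq : (lam * γ * (lam/2) ^ ρ)^2 ≤ (lam * γ * r ^ ρ)^2 := by
    apply pow_le_pow_left₀ hc0.le _ 2
    exact mul_le_mul_of_nonneg_left hXmono (mul_pos hlam hγ).le
  refine div_le_div₀ (mul_nonneg (sq_nonneg lam) (Real.rpow_pos_of_pos hhalf _).le)
    (mul_le_mul_of_nonneg_left hpow (sq_nonneg lam)) hd0 ?_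
  nlinarith [hsq]

lemma h_le_p3 (hγ : 0 < γ) (hlam : 0 < lam) {r : ℝ} (hr : 2*lam < r) :
    lam^2 * r ^ ρ / (r * ((lam - r)^2 + (lam * γ * r ^ ρ)^2)) ≤
      (lam/γ) * r ^ (-2 : ℝ) := by
  have hr0 : 0 < r := lt_trans (by linarith) hr
  have hX : 0 < r ^ ρ := Real.rpow_pos_of_pos hr0 ρ
  have hB : 0 < lam * γ * r ^ ρ := mul_pos (mul_pos hlam hγ) hX
  have hden : r * (r * (lam * γ * r ^ ρ)) ≤ r * ((lam - r)^2 + (lam * γ * r ^ ρ)^2) := by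
    apply mul_le_mul_of_nonneg_left _ hr0.le
    nlinarith [sq_nonneg (r - lam - lam * γ * r ^ ρ),
      mul_nonneg (by linarith : (0:ℝ) ≤ r - 2*lam) hB.le]
  have hr2 : r ^ (-2:ℝ) = (r^2)⁻¹ := by
    rw [show (-2:ℝ) = -(2:ℕ) by norm_num, Real.rpow_neg hr0.le, Real.rpow_natCast]
  calc lam^2 * r ^ ρ / (r * ((lam - r)^2 + (lam * γ * r ^ ρ)^2))
      ≤ lam^2 * r ^ ρ / (r * (r * (lam * γ * r ^ ρ))) :=
        div_le_div_of_nonneg_left (mul_nonneg (sq_nonneg lam) hX.le) (by positivity) hden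
    _ = (lam/γ) * r ^ (-2:ℝ) := by
        rw [hr2]; field_simp [hr0.ne', hX.ne', hγ.ne', hlam.ne']

lemma gamma_intOn (hρ0 : 0 < ρ) (hρ1 : ρ < 1) (ht : 0 < t) :
    IntegrableOn (fun r : ℝ => r ^ (-ρ) * Real.exp (-(t*r))) (Ioi (0:ℝ)) := by
  have h := integrableOn_rpow_mul_exp_neg_mul_rpow (s := -ρ) (p := 1) (b := t)
    (by linarith) one_pos ht
  exact h.congr_fun (fun x hx => by simp only [pow_one, Real.rpow_one, neg_mul]) measurableSet_Ioi

lemma gamma_integral (hρ0 : 0 < ρ) (hρ1 : ρ < 1) (ht : 0 < t) :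
    ∫ r in Ioi (0:ℝ), r ^ (-ρ) * Real.exp (-(t*r)) = Real.Gamma (1-ρ) * t ^ (ρ-1) := by
  have h := Real.integral_rpow_mul_exp_neg_mul_Ioi (a := 1-ρ) (r := t) (by linarith) ht
  rw [show (1-ρ) - 1 = -ρ by ring] at h
  rw [h, one_div, ← Real.rpow_neg_one t, ← Real.rpow_mul ht.le, mul_comm]
  norm_num

lemma g_intOn (hρ0 : 0 < ρ) (hρ1 : ρ < 1) (hs : 0 < Real.sin (ρ*π)) (hγ : 0 < γ)
    (hlam : 0 < lam) (ht : 0 < t) :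
    IntegrableOn (fun r => lam * f ρ γ lam t r) (Ioi (0:ℝ)) := by
  refine Integrable.mono'
    (g := fun r => (γ^2 * Real.sin (ρ*π))⁻¹ * (r ^ (-ρ) * Real.exp (-(t*r)))) ?_ ?_ ?_
  · exact (gamma_intOn hρ0 hρ1 ht).const_mul _
  · exact (continuousOn_const.mul (f_contOn hs hγ hlam)).aestronglyMeasurable measurableSet_Ioi
  · filter_upwards [ae_restrict_mem measurableSet_Ioi] with r hr
    rw [Real.norm_eq_abs, abs_of_nonneg (mul_nonneg hlam.le (f_nonneg hs hγ hlam hr))]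
    exact g_le_A hs hγ hlam hr

lemma boundA (hρ0 : 0 < ρ) (hρ1 : ρ < 1) (hs : 0 < Real.sin (ρ*π)) (hγ : 0 < γ)
    (hlam : 0 < lam) (ht : 0 < t) :
    lam * Brho ρ γ lam t ≤
      ((γ/π) * ((γ^2 * Real.sin (ρ*π))⁻¹ * Real.Gamma (1-ρ))) * t ^ (ρ-1) := by
  have h1 : lam * Brho ρ γ lam t = (γ/π) * ∫ r in Ioi (0:ℝ), lam * f ρ γ lam t r := by
    rw [Brho_eq, integral_const_mul]; ring
  rw [h1]
  have h2 : (∫ r in Ioi (0:ℝ), lam * f ρ γ lam t r) ≤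
      ∫ r in Ioi (0:ℝ), (γ^2 * Real.sin (ρ*π))⁻¹ * (r ^ (-ρ) * Real.exp (-(t*r))) :=
    setIntegral_mono_on (g_intOn hρ0 hρ1 hs hγ hlam ht)
      ((gamma_intOn hρ0 hρ1 ht).const_mul _) measurableSet_Ioi
      (fun r hr => g_le_A hs hγ hlam hr)
  have h3 : (∫ r in Ioi (0:ℝ), (γ^2 * Real.sin (ρ*π))⁻¹ * (r ^ (-ρ) * Real.exp (-(t*r)))) =
      (γ^2 * Real.sin (ρ*π))⁻¹ * (Real.Gamma (1-ρ) * t ^ (ρ-1)) := by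
    rw [integral_const_mul, gamma_integral hρ0 hρ1 ht]
  calc (γ/π) * ∫ r in Ioi (0:ℝ), lam * f ρ γ lam t r
      ≤ (γ/π) * ∫ r in Ioi (0:ℝ), (γ^2 * Real.sin (ρ*π))⁻¹ *
          (r ^ (-ρ) * Real.exp (-(t*r))) :=
        mul_le_mul_of_nonneg_left h2 (div_nonneg hγ.le Real.pi_pos.le)
    _ = ((γ/π) * ((γ^2 * Real.sin (ρ*π))⁻¹ * Real.Gamma (1-ρ))) * t ^ (ρ-1) := by
        rw [h3]; ring

set_option maxHeartbeats 1000000 in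
lemma boundB (hρ0 : 0 < ρ) (hρ1 : ρ < 1) (hs : 0 < Real.sin (ρ*π)) (hγ : 0 < γ)
    (hlam : 0 < lam) (ht : 0 < t) :
    lam * Brho ρ γ lam t ≤
      ((γ/π) * (Real.sin (ρ*π) / (1 - |Real.cos (ρ*π)|)) *
        (4/ρ + (γ^2)⁻¹/ρ + 2*π/γ + (2*γ)⁻¹)) * t⁻¹ := by
  have hκ : 0 < 1 - |Real.cos (ρ*π)| := by
    nlinarith [sq_abs (Real.cos (ρ*π)), abs_nonneg (Real.cos (ρ*π)), mul_pos hs hs,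
      Real.sin_sq_add_cos_sq (ρ*π)]
  set cst : ℝ := Real.sin (ρ*π) / ((1 - |Real.cos (ρ*π)|) * t) with hcst_def
  have hcst : 0 < cst := div_pos hs (mul_pos hκ ht)
  have hgint := g_intOn hρ0 hρ1 hs hγ hlam ht
  have hsub1 : Ioc (0:ℝ) (lam/2) ⊆ Ioi 0 := Ioc_subset_Ioi_self
  have hsub2 : Ioc (lam/2) (2*lam) ⊆ Ioi (0:ℝ) :=
    Ioc_subset_Ioi_self.trans (Ioi_subset_Ioi (by linarith))
  have hsub3 : Ioi (2*lam) ⊆ Ioi (0:ℝ) := Ioi_subset_Ioi (by linarith)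
  have hsplit : (∫ r in Ioi (0:ℝ), lam * f ρ γ lam t r) =
      (∫ r in Ioc (0:ℝ) (lam/2), lam * f ρ γ lam t r) +
      ((∫ r in Ioc (lam/2) (2*lam), lam * f ρ γ lam t r) +
        (∫ r in Ioi (2*lam), lam * f ρ γ lam t r)) := by
    have e1 : Ioi (0:ℝ) = Ioc 0 (lam/2) ∪ Ioi (lam/2) :=
      (Ioc_union_Ioi_eq_Ioi (by linarith)).symm
    have e2 : Ioi (lam/2 : ℝ) = Ioc (lam/2) (2*lam) ∪ Ioi (2*lam) :=
      (Ioc_union_Ioi_eq_Ioi (by linarith)).symm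
    rw [e1, setIntegral_union (Ioc_disjoint_Ioi le_rfl) measurableSet_Ioi
      (hgint.mono_set hsub1) (hgint.mono_set (Ioi_subset_Ioi (by linarith)))]
    rw [e2, setIntegral_union (Ioc_disjoint_Ioi le_rfl) measurableSet_Ioi
      (hgint.mono_set hsub2) (hgint.mono_set hsub3)]
  -- Piece 1
  have hp1 : (∫ r in Ioc (0:ℝ) (lam/2), lam * f ρ γ lam t r) ≤
      cst * (4/ρ + (γ^2)⁻¹/ρ) := by
    have step1 : (∫ r in Ioc (0:ℝ) (lam/2), lam * f ρ γ lam t r) ≤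
        ∫ r in Ioc (0:ℝ) (lam/2), cst * F ρ γ r := by
      refine setIntegral_mono_on (hgint.mono_set hsub1)
        (((F_intOn hρ0 hρ1).mono_set hsub1).const_mul cst) measurableSet_Ioc
        (fun r hr => ?_)
      refine (g_le_B hs hγ hlam ht hr.1).trans ?_
      exact mul_le_mul_of_nonneg_left (h_le_p1 hρ0 hγ hlam hr.1 hr.2) hcst.le
    refine step1.trans ?_
    rw [integral_const_mul]
    refine mul_le_mul_of_nonneg_left ?_ hcst.le
    refine le_trans (setIntegral_mono_set (F_intOn hρ0 hρ1) ?_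
      (HasSubset.Subset.eventuallyLE hsub1)) (F_integral hρ0 hρ1)
    filter_upwards [ae_restrict_mem measurableSet_Ioi] with r hr
    exact F_nonneg hr
  -- Piece 2
  have hhalf : 0 < lam/2 := half_pos hlam
  have hc0 : 0 < lam * γ * (lam/2) ^ ρ :=
    mul_pos (mul_pos hlam hγ) (Real.rpow_pos_of_pos hhalf ρ)
  have hp2 : (∫ r in Ioc (lam/2) (2*lam), lam * f ρ γ lam t r) ≤
      cst * (2*π/γ) := by
    have hK : 0 ≤ lam^2 * (lam/2) ^ (ρ-1) :=
      mul_nonneg (sq_nonneg lam) (Real.rpow_pos_of_pos hhalf _).le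
    have hcont2 : Continuous fun r : ℝ =>
        cst * ((lam^2 * (lam/2) ^ (ρ-1)) * ((r - lam)^2 + (lam * γ * (lam/2) ^ ρ)^2)⁻¹) :=
      continuous_const.mul (continuous_const.mul (Continuous.inv₀ (by continuity)
        (fun x => by positivity)))
    have step1 : (∫ r in Ioc (lam/2) (2*lam), lam * f ρ γ lam t r) ≤
        ∫ r in Ioc (lam/2) (2*lam),
          cst * ((lam^2 * (lam/2) ^ (ρ-1)) *
            ((r - lam)^2 + (lam * γ * (lam/2) ^ ρ)^2)⁻¹) := by
      refine setIntegral_mono_on (hgint.mono_set hsub2)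
        (hcont2.integrableOn_Ioc) measurableSet_Ioc (fun r hr => ?_)
      refine (g_le_B hs hγ hlam ht (lt_trans hhalf hr.1)).trans ?_
      exact mul_le_mul_of_nonneg_left (h_le_p2 hρ0 hρ1 hγ hlam hr.1) hcst.le
    refine step1.trans ?_
    rw [integral_const_mul, integral_const_mul]
    have step2 : (∫ r in Ioc (lam/2) (2*lam),
        ((r - lam)^2 + (lam * γ * (lam/2) ^ ρ)^2)⁻¹) ≤ π / (lam * γ * (lam/2) ^ ρ) :=
      cauchy_le hc0 (by linarith)
    have hval : (lam^2 * (lam/2) ^ (ρ-1)) * (π / (lam * γ * (lam/2) ^ ρ)) =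
        2*π/γ := by
      rw [show ((lam/2 : ℝ)) ^ (ρ-1) = (lam/2) ^ ρ / (lam/2) by
        rw [Real.rpow_sub hhalf, Real.rpow_one]]
      field_simp
    refine mul_le_mul_of_nonneg_left ?_ hcst.le
    calc (lam^2 * (lam/2) ^ (ρ-1)) *
          ∫ r in Ioc (lam/2) (2*lam), ((r - lam)^2 + (lam * γ * (lam/2) ^ ρ)^2)⁻¹
        ≤ (lam^2 * (lam/2) ^ (ρ-1)) * (π / (lam * γ * (lam/2) ^ ρ)) :=
          mul_le_mul_of_nonneg_left step2 hK
      _ = 2*π/γ := hval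
  -- Piece 3
  have h2lam : 0 < 2*lam := by linarith
  have hp3 : (∫ r in Ioi (2*lam), lam * f ρ γ lam t r) ≤ cst * (2*γ)⁻¹ := by
    have step1 : (∫ r in Ioi (2*lam), lam * f ρ γ lam t r) ≤
        ∫ r in Ioi (2*lam), cst * ((lam/γ) * r ^ (-2:ℝ)) := by
      refine setIntegral_mono_on (hgint.mono_set hsub3)
        (((integrableOn_Ioi_rpow_of_lt (by norm_num) h2lam).const_mul _).const_mul _)
        measurableSet_Ioi (fun r hr => ?_)
      refine (g_le_B hs hγ hlam ht (lt_trans h2lam hr)).trans ?_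
      exact mul_le_mul_of_nonneg_left (h_le_p3 hγ hlam hr) hcst.le
    refine step1.trans ?_
    rw [integral_const_mul, integral_const_mul, integral_Ioi_rpow_of_lt (by norm_num) h2lam]
    rw [show (-2:ℝ) + 1 = -1 by norm_num, Real.rpow_neg_one]
    rw [show -(2*lam)⁻¹ / (-1 : ℝ) = (2*lam)⁻¹ by ring]
    refine le_of_eq ?_
    field_simp
  -- Combine
  have h1 : lam * Brho ρ γ lam t = (γ/π) * ∫ r in Ioi (0:ℝ), lam * f ρ γ lam t r := by
    rw [Brho_eq, integral_const_mul]; ring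
  rw [h1]
  have hsum : (∫ r in Ioi (0:ℝ), lam * f ρ γ lam t r) ≤
      cst * (4/ρ + (γ^2)⁻¹/ρ + 2*π/γ + (2*γ)⁻¹) := by
    rw [hsplit]; nlinarith [hp1, hp2, hp3]
  refine le_trans (mul_le_mul_of_nonneg_left hsum (div_nonneg hγ.le Real.pi_pos.le))
    (le_of_eq ?_)
  rw [hcst_def]
  field_simp

end

end BrhoAux

/-- `λ B_ρ(λ,t) ≤ C min{t⁻¹, t^{ρ−1}}` for all `λ > 0`, `t > 0`. -/
theorem Brho_decay (ρ γ : ℝ) (hρ : ρ ∈ Ioo (0 : ℝ) 1) (hγ : 0 < γ) :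
    ∃ C > (0 : ℝ), ∀ lam > (0 : ℝ), ∀ t > (0 : ℝ),
      lam * Brho ρ γ lam t ≤ C * min t⁻¹ (t ^ (ρ - 1)) := by
  obtain ⟨hρ0, hρ1⟩ := hρ
  have hs : 0 < Real.sin (ρ*π) :=
    Real.sin_pos_of_pos_of_lt_pi (mul_pos hρ0 Real.pi_pos) (by nlinarith [Real.pi_pos])
  have hκ : 0 < 1 - |Real.cos (ρ*π)| := by
    nlinarith [sq_abs (Real.cos (ρ*π)), abs_nonneg (Real.cos (ρ*π)), mul_pos hs hs,
      Real.sin_sq_add_cos_sq (ρ*π)]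
  set C1 : ℝ := (γ/π) * ((γ^2 * Real.sin (ρ*π))⁻¹ * Real.Gamma (1-ρ)) with hC1_def
  set C2 : ℝ := (γ/π) * (Real.sin (ρ*π) / (1 - |Real.cos (ρ*π)|)) *
    (4/ρ + (γ^2)⁻¹/ρ + 2*π/γ + (2*γ)⁻¹) with hC2_def
  have hC1 : 0 < C1 :=
    mul_pos (div_pos hγ Real.pi_pos)
      (mul_pos (inv_pos.mpr (mul_pos (pow_pos hγ 2) hs))
        (Real.Gamma_pos_of_pos (by linarith)))
  have hC2 : 0 < C2 := by
    refine mul_pos (mul_pos (div_pos hγ Real.pi_pos) (div_pos hs hκ)) ?_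
    have h1 : 0 < 4/ρ := by positivity
    have h2 : 0 < (γ^2)⁻¹/ρ := div_pos (inv_pos.mpr (pow_pos hγ 2)) hρ0
    have h3 : 0 < 2*π/γ := div_pos (by linarith [Real.pi_pos]) hγ
    have h4 : 0 < (2*γ)⁻¹ := inv_pos.mpr (by linarith)
    linarith
  refine ⟨C1 + C2, by linarith, fun lam hlam t ht => ?_⟩
  rcases min_cases t⁻¹ (t ^ (ρ-1)) with ⟨h1, _⟩ | ⟨h1, _⟩ <;> rw [h1]
  · exact le_trans (BrhoAux.boundB hρ0 hρ1 hs hγ hlam ht)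
      (mul_le_mul_of_nonneg_right (by linarith) (inv_nonneg.mpr ht.le))
  · exact le_trans (BrhoAux.boundA hρ0 hρ1 hs hγ hlam ht)
      (mul_le_mul_of_nonneg_right (by linarith) (Real.rpow_nonneg ht.le _))
end
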